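/- arXiv:2101.00988 — 3 statements merged into one kernel-verified Lean document; each statement's English description precedes it below -/
import Mathlib

section
/- Let A be a 5×5 integer matrix and s ∈ ℤ⁵. There exists a vector α = (a₁,…,a₆) ∈ ℤ⁶ such that the 6×6 matrix with columns (v₁,s₁),…,(v₅,s₅) (columns vᵢ of A extended by sᵢ) and α has determinant ±1 if and only if gcd(det A, det(A)₁, det(A)₂, det(A)₃, det(A)₄, det(A)₅) = 1, where (A)ⱼ denotes A with its j-th row replaced by s. -/
/-- The 6×6 matrix whose first five columns are the columns of `A` extended by the
entries of `s` in the sixth row, and whose sixth column is `a`. -/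
def extMat (A : Matrix (Fin 5) (Fin 5) ℤ) (s : Fin 5 → ℤ) (a : Fin 6 → ℤ) :
    Matrix (Fin 6) (Fin 6) ℤ :=
  Matrix.of fun i j =>
    if hj : (j : ℕ) < 5 then
      if hi : (i : ℕ) < 5 then A ⟨i, hi⟩ ⟨j, hj⟩ else s ⟨j, hj⟩
    else a i

/-- Bezout identity for a finset gcd over ℤ. -/
lemma gcd_eq_sum {ι : Type*} [DecidableEq ι] (s : Finset ι) (f : ι → ℤ) :
    ∃ u : ι → ℤ, (s.gcd f : ℤ) = ∑ j ∈ s, u j * f j := by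
  classical
  induction s using Finset.induction_on with
  | empty => exact ⟨0, by simp⟩
  | insert x t hx ih =>
    obtain ⟨u, hu⟩ := ih
    refine ⟨fun j => if j = x then (f x).gcdA (t.gcd f) else (f x).gcdB (t.gcd f) * u j, ?_⟩
    have hs : ∑ j ∈ t, (if j = x then (f x).gcdA (t.gcd f)
        else (f x).gcdB (t.gcd f) * u j) * f j
        = (f x).gcdB (t.gcd f) * ∑ j ∈ t, u j * f j := by
      rw [Finset.mul_sum]
      refine Finset.sum_congr rfl fun j hj => ?_
      rw [if_neg (by rintro rfl; exact hx hj)]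
      ring
    rw [Finset.gcd_insert, ← Int.coe_gcd, Int.gcd_eq_gcd_ab, Finset.sum_insert hx]
    simp only [hs, eq_self_iff_true, if_true]
    rw [← hu]
    ring

/-- The cofactor submatrix (independent of `a`). -/
def subM (A : Matrix (Fin 5) (Fin 5) ℤ) (s : Fin 5 → ℤ) (i : Fin 6) :
    Matrix (Fin 5) (Fin 5) ℤ :=
  (extMat A s 0).submatrix i.succAbove Fin.castSucc

/-- The six minors. -/
def gvec (A : Matrix (Fin 5) (Fin 5) ℤ) (s : Fin 5 → ℤ) (i : Fin 6) : ℤ :=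
  if h : (i : ℕ) < 5 then (A.updateRow ⟨i, h⟩ s).det else A.det

/-- The signed cofactors of the last column. -/
def cvec (A : Matrix (Fin 5) (Fin 5) ℤ) (s : Fin 5 → ℤ) (i : Fin 6) : ℤ :=
  (-1) ^ ((i : ℕ) + 5) * (subM A s i).det

lemma submatrix_eq (A : Matrix (Fin 5) (Fin 5) ℤ) (s : Fin 5 → ℤ) (a : Fin 6 → ℤ)
    (i : Fin 6) :
    (extMat A s a).submatrix i.succAbove Fin.castSucc = subM A s i := by
  ext j k
  simp only [subM, Matrix.submatrix_apply, extMat, Matrix.of_apply]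
  have hk : ((Fin.castSucc k : Fin 6) : ℕ) < 5 := k.isLt
  rw [dif_pos hk, dif_pos hk]

lemma det_extMat (A : Matrix (Fin 5) (Fin 5) ℤ) (s : Fin 5 → ℤ) (a : Fin 6 → ℤ) :
    (extMat A s a).det = ∑ i : Fin 6, a i * cvec A s i := by
  rw [Matrix.det_succ_column (extMat A s a) (Fin.last 5)]
  refine Finset.sum_congr rfl fun i _ => ?_
  rw [Fin.succAbove_last, submatrix_eq]
  have h5 : ¬ ((Fin.last 5 : Fin 6) : ℕ) < 5 := by
    rw [Fin.val_last]; exact Nat.lt_irrefl 5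
  have : (extMat A s a) i (Fin.last 5) = a i := by
    simp only [extMat, Matrix.of_apply]
    rw [dif_neg h5]
  rw [this, cvec]
  simp only [Fin.val_last]
  ring

lemma subM_last (A : Matrix (Fin 5) (Fin 5) ℤ) (s : Fin 5 → ℤ) :
    subM A s (Fin.last 5) = A := by
  ext j k
  simp only [subM, Matrix.submatrix_apply, extMat, Matrix.of_apply, Fin.succAbove_last]
  have hk : ((Fin.castSucc k : Fin 6) : ℕ) < 5 := k.isLt
  have hj : ((Fin.castSucc j : Fin 6) : ℕ) < 5 := j.isLt
  rw [dif_pos hk, dif_pos hj]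
  congr 1

lemma subM_lt (A : Matrix (Fin 5) (Fin 5) ℤ) (s : Fin 5 → ℤ) (i : Fin 6)
    (hi : (i : ℕ) < 5) :
    ∃ ε : ℤ, (ε = 1 ∨ ε = -1) ∧
      (subM A s i).det = ε * (A.updateRow ⟨i, hi⟩ s).det := by
  classical
  set f : Fin 5 → Fin 5 := fun j =>
    if h : ((i.succAbove j : Fin 6) : ℕ) < 5 then ⟨_, h⟩ else ⟨i, hi⟩ with hf
  have hinj : Function.Injective f := by
    intro j1 j2 h
    simp only [hf] at h
    by_cases h1 : ((i.succAbove j1 : Fin 6) : ℕ) < 5 <;>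
      by_cases h2 : ((i.succAbove j2 : Fin 6) : ℕ) < 5
    · rw [dif_pos h1, dif_pos h2, Fin.mk.injEq] at h
      exact Fin.succAbove_right_injective (Fin.ext h)
    · rw [dif_pos h1, dif_neg h2, Fin.mk.injEq] at h
      exact absurd (Fin.ext h : (i.succAbove j1 : Fin 6) = i) (Fin.succAbove_ne i j1)
    · rw [dif_neg h1, dif_pos h2, Fin.mk.injEq] at h
      exact absurd (Fin.ext h.symm : (i.succAbove j2 : Fin 6) = i) (Fin.succAbove_ne i j2)
    · have e1 : ((i.succAbove j1 : Fin 6) : ℕ) = 5 :=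
        le_antisymm (Nat.lt_succ_iff.mp (i.succAbove j1).isLt) (not_lt.mp h1)
      have e2 : ((i.succAbove j2 : Fin 6) : ℕ) = 5 :=
        le_antisymm (Nat.lt_succ_iff.mp (i.succAbove j2).isLt) (not_lt.mp h2)
      exact Fin.succAbove_right_injective (Fin.ext (e1.trans e2.symm))
  let σ : Equiv.Perm (Fin 5) := Equiv.ofBijective f (Finite.injective_iff_bijective.mp hinj)
  have hmat : subM A s i = (A.updateRow ⟨i, hi⟩ s).submatrix σ id := by
    ext j k
    simp only [subM, Matrix.submatrix_apply, extMat, Matrix.of_apply, id]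
    have hk : ((Fin.castSucc k : Fin 6) : ℕ) < 5 := k.isLt
    rw [dif_pos hk]
    have hσ : σ j = f j := rfl
    by_cases h : ((i.succAbove j : Fin 6) : ℕ) < 5
    · rw [dif_pos h]
      have hne : σ j ≠ ⟨i, hi⟩ := by
        rw [hσ, hf]
        simp only [dif_pos h]
        intro hc
        rw [Fin.mk.injEq] at hc
        exact Fin.succAbove_ne i j (Fin.ext hc)
      rw [Matrix.updateRow_ne hne, hσ, hf]
      simp only [dif_pos h]
      congr 1
    · rw [dif_neg h]
      have heq : σ j = ⟨i, hi⟩ := by rw [hσ, hf]; simp only [dif_neg h]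
      rw [heq, Matrix.updateRow_self]
      congr 1
  refine ⟨((Equiv.Perm.sign σ : ℤˣ) : ℤ), ?_, ?_⟩
  · rcases Int.units_eq_one_or (Equiv.Perm.sign σ : ℤˣ) with h | h <;> rw [h] <;> simp
  · rw [hmat, Matrix.det_permute]
    norm_cast

lemma cvec_eq (A : Matrix (Fin 5) (Fin 5) ℤ) (s : Fin 5 → ℤ) (i : Fin 6) :
    ∃ ε : ℤ, (ε = 1 ∨ ε = -1) ∧ cvec A s i = ε * gvec A s i := by
  by_cases h : (i : ℕ) < 5
  · obtain ⟨ε, hε, hdet'⟩ := subM_lt A s i h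
    refine ⟨(-1) ^ ((i : ℕ) + 5) * ε, ?_, ?_⟩
    · rcases neg_one_pow_eq_or ℤ ((i : ℕ) + 5) with hp | hp <;>
        rcases hε with rfl | rfl <;> rw [hp] <;> norm_num
    · simp only [cvec, gvec, dif_pos h]
      rw [hdet']
      ring
  · have hi5 : i = Fin.last 5 := by
      have : (i : ℕ) = 5 := le_antisymm (Nat.lt_succ_iff.mp i.isLt) (not_lt.mp h)
      exact Fin.ext this
    refine ⟨1, Or.inl rfl, ?_⟩
    simp only [cvec, gvec, dif_neg h]
    subst hi5
    rw [subM_last]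
    norm_num

/-- There is a sixth column making the extended matrix unimodular iff
gcd(det A, det (A)₁, …, det (A)₅) = 1. -/
theorem stmt_11 (A : Matrix (Fin 5) (Fin 5) ℤ) (s : Fin 5 → ℤ) :
    (∃ a : Fin 6 → ℤ, (extMat A s a).det = 1 ∨ (extMat A s a).det = -1) ↔
      Int.gcd A.det
        ((Finset.univ : Finset (Fin 5)).gcd fun j => (A.updateRow j s).det) = 1 := by
  classical
  set F : ℤ := (Finset.univ : Finset (Fin 5)).gcd fun j => (A.updateRow j s).det with hF
  constructor
  · rintro ⟨a, ha⟩
    have hdvd : (Int.gcd A.det F : ℤ) ∣ (extMat A s a).det := by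
      rw [det_extMat]
      refine Finset.dvd_sum fun i _ => ?_
      obtain ⟨ε, hε, hci⟩ := cvec_eq A s i
      rw [hci]
      have hgi : (Int.gcd A.det F : ℤ) ∣ gvec A s i := by
        by_cases h : (i : ℕ) < 5
        · rw [gvec, dif_pos h]
          exact dvd_trans (Int.gcd_dvd_right _ _) (Finset.gcd_dvd (Finset.mem_univ _))
        · rw [gvec, dif_neg h]; exact Int.gcd_dvd_left _ _
      exact Dvd.dvd.mul_left (hgi.mul_left ε) (a i)
    have h1 : (Int.gcd A.det F : ℤ) ∣ 1 := by
      rcases ha with h | h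
      · rwa [h] at hdvd
      · rw [h] at hdvd; exact dvd_neg.mp hdvd
    exact Nat.dvd_one.mp (Int.natCast_dvd_natCast.mp (by exact_mod_cast h1))
  · intro hgcd
    obtain ⟨u, hu⟩ := gcd_eq_sum (Finset.univ : Finset (Fin 5))
      (fun j => (A.updateRow j s).det)
    have hbez : (1 : ℤ) = A.det * A.det.gcdA F + F * A.det.gcdB F := by
      have := Int.gcd_eq_gcd_ab A.det F
      rw [hgcd] at this
      exact_mod_cast this
    set w : Fin 6 → ℤ := fun i =>
      if h : (i : ℕ) < 5 then A.det.gcdB F * u ⟨i, h⟩ else A.det.gcdA F with hw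
    have hsum : ∑ i : Fin 6, w i * gvec A s i = 1 := by
      rw [Fin.sum_univ_castSucc]
      have h5 : ¬ ((Fin.last 5 : Fin 6) : ℕ) < 5 := by
        rw [Fin.val_last]; exact Nat.lt_irrefl 5
      have hlast : w (Fin.last 5) * gvec A s (Fin.last 5) = A.det * A.det.gcdA F := by
        simp only [hw, gvec, dif_neg h5]
        ring
      have hrest : ∀ j : Fin 5, w (Fin.castSucc j) * gvec A s (Fin.castSucc j) =
          A.det.gcdB F * (u j * (A.updateRow j s).det) := by
        intro j
        have hj : ((Fin.castSucc j : Fin 6) : ℕ) < 5 := j.isLt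
        simp only [hw, gvec, dif_pos hj]
        have he : (⟨((Fin.castSucc j : Fin 6) : ℕ), hj⟩ : Fin 5) = j := Fin.ext rfl
        rw [he]
        ring
      rw [hlast, Finset.sum_congr rfl fun j _ => hrest j, ← Finset.mul_sum, ← hu, hbez]
      ring
    choose ε hε hcε using cvec_eq A s
    refine ⟨fun i => w i * ε i, Or.inl ?_⟩
    rw [det_extMat]
    have key : ∀ i : Fin 6, w i * ε i * cvec A s i = w i * gvec A s i := by
      intro i
      rw [hcε i]
      rcases hε i with h | h <;> rw [h] <;> ring
    rw [Finset.sum_congr rfl fun i _ => key i, hsum]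
end

section
/- There is no 5×5 matrix M with entries in {0,1} such that all five columns of M have exactly three nonzero entries, M is invertible over ℤ/2, M has integer determinant ±3, and every 4×4 minor of M corresponding to an entry equal to 1 has determinant ±1. -/
open Finset

private lemma aux_sum3 (s : Finset (Fin 5)) (f : Fin 5 → ℤ) (h3 : s.card = 3)
    (hf : ∀ x ∈ s, f x = 1 ∨ f x = -1) (hs : ∑ x ∈ s, f x = 3) : ∀ x ∈ s, f x = 1 := by
  have h0 : ∑ x ∈ s, (1 - f x) = 0 := by
    rw [Finset.sum_sub_distrib, hs, Finset.sum_const, h3]; simp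
  have hnn : ∀ x ∈ s, (0:ℤ) ≤ 1 - f x := by
    intro x hx; rcases hf x hx with h | h <;> simp [h]
  have := (Finset.sum_eq_zero_iff_of_nonneg hnn).mp h0
  intro x hx; have h := this x hx; linarith

private lemma aux_cast_even {n : ℕ} (h : Even n) : (n : ZMod 2) = 0 := by
  rw [ZMod.natCast_eq_zero_iff]; exact h.two_dvd

private lemma aux_cast_odd {n : ℕ} (h : Odd n) : (n : ZMod 2) = 1 := by
  obtain ⟨k, rfl⟩ := h; push_cast
  have h2 : (2 : ZMod 2) = 0 := by decide
  rw [h2]; ring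

private lemma aux_even_sum {s : Finset (Fin 5)} {f : Fin 5 → ZMod 2}
    (hconst : ∀ a ∈ s, ∀ b ∈ s, f a = f b) (he : Even s.card) : ∑ x ∈ s, f x = 0 := by
  rcases s.eq_empty_or_nonempty with rfl | ⟨a, ha⟩
  · simp
  · have h1 : ∑ x ∈ s, f x = s.card • f a :=
      (Finset.sum_congr rfl fun b hb => hconst b hb a ha).trans (Finset.sum_const _)
    rw [h1, nsmul_eq_mul, aux_cast_even he, zero_mul]

/-- No 5×5 binary matrix has all columns with exactly three nonzero entries, is
invertible over ℤ/2, has integer determinant ±3, and has all 4×4 minors at entries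
equal to 1 of determinant ±1. -/
theorem stmt_14 :
    ¬ ∃ M : Matrix (Fin 5) (Fin 5) ℤ,
      (∀ i j, M i j = 0 ∨ M i j = 1) ∧
      (∀ j : Fin 5, (Finset.univ.filter fun i => M i j ≠ 0).card = 3) ∧
      (M.map (Int.cast : ℤ → ZMod 2)).det ≠ 0 ∧
      (M.det = 3 ∨ M.det = -3) ∧
      (∀ i j : Fin 5, M i j = 1 →
        ((M.submatrix i.succAbove j.succAbove).det = 1 ∨
         (M.submatrix i.succAbove j.succAbove).det = -1)) := by
  rintro ⟨M, h01, hcol, -, hdet, hmin⟩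
  classical
  set cof : Fin 5 → Fin 5 → ℤ :=
    fun i j => (-1) ^ ((i:ℕ) + (j:ℕ)) * (M.submatrix i.succAbove j.succAbove).det with hcof_def
  obtain ⟨ε, hε1, hde⟩ : ∃ ε : ℤ, (ε = 1 ∨ ε = -1) ∧ M.det = 3 * ε := by
    rcases hdet with h | h
    · exact ⟨1, Or.inl rfl, by omega⟩
    · exact ⟨-1, Or.inr rfl, by omega⟩
  have hεne : ε ≠ 0 := by rcases hε1 with h | h <;> simp [h]
  have hεZ : ((ε : ℤ) : ZMod 2) = 1 := by rcases hε1 with h | h <;> rw [h] <;> decide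
  have hT : ∀ j, (Finset.univ.filter fun i => M i j = 1).card = 3 := by
    intro j; rw [← hcol j]; congr 1
    apply Finset.filter_congr
    intro i _; rcases h01 i j with h | h <;> simp [h]
  have hmul : ∀ i j (z : ℤ), M i j * z = if M i j = 1 then z else 0 := by
    intro i j z; rcases h01 i j with h | h <;> simp [h]
  -- cofactors at ones are ±1
  have hpm : ∀ i j, M i j = 1 → cof i j = 1 ∨ cof i j = -1 := by
    intro i j h
    have hsgn : ((-1:ℤ)) ^ ((i:ℕ) + (j:ℕ)) = 1 ∨ ((-1:ℤ)) ^ ((i:ℕ) + (j:ℕ)) = -1 := by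
      rcases Nat.even_or_odd ((i:ℕ) + (j:ℕ)) with he | ho
      · exact Or.inl he.neg_one_pow
      · exact Or.inr ho.neg_one_pow
    rcases hmin i j h with hm | hm <;> rcases hsgn with hs | hs <;>
      simp [hcof_def, hm, hs]
  -- column expansion
  have hcolsum : ∀ j, ∑ i ∈ Finset.univ.filter (fun i => M i j = 1), cof i j = 3 * ε := by
    intro j
    rw [Finset.sum_filter, ← hde, Matrix.det_succ_column M j]
    refine Finset.sum_congr rfl fun i _ => ?_
    rw [← hmul i j (cof i j)]; simp only [hcof_def]; ring
  -- all cofactors at ones equal ε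
  have hkey : ∀ i j, M i j = 1 → cof i j = ε := by
    intro i j h
    have hiT : i ∈ Finset.univ.filter fun i => M i j = 1 := by simp [h]
    rcases hε1 with hε | hε
    · have := aux_sum3 _ (fun i => cof i j) (hT j)
        (fun x hx => hpm x j (by simpa using hx))
        (by rw [hcolsum j, hε]; ring)
      rw [hε]; exact this i hiT
    · have h2 := aux_sum3 _ (fun i => - cof i j) (hT j)
        (fun x hx => by
          rcases hpm x j (by simpa using hx) with h' | h' <;> simp [h'])
        (by rw [Finset.sum_neg_distrib, hcolsum j, hε]; ring)
      have h3 := h2 i hiT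
      rw [hε]; linarith
  -- row support sums
  have hSsum : ∀ i, ∑ j ∈ Finset.univ.filter (fun j => M i j = 1), cof i j
      = ((Finset.univ.filter fun j => M i j = 1).card : ℤ) * ε := by
    intro i
    rw [Finset.sum_congr rfl (fun j hj => hkey i j (by simpa using hj)),
      Finset.sum_const, nsmul_eq_mul]
  -- row supports have card 3
  have hrow : ∀ i, (Finset.univ.filter fun j => M i j = 1).card = 3 := by
    intro i
    have h2 : M.det = ∑ j ∈ Finset.univ.filter (fun j => M i j = 1), cof i j := by
      rw [Finset.sum_filter, Matrix.det_succ_row M i]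
      refine Finset.sum_congr rfl fun j _ => ?_
      rw [← hmul i j (cof i j)]; simp only [hcof_def]; ring
    have h3 : (3:ℤ) * ε = ((Finset.univ.filter fun j => M i j = 1).card : ℤ) * ε := by
      rw [← hde, h2]; exact hSsum i
    have h4 := mul_right_cancel₀ hεne h3
    exact_mod_cast h4.symm
  -- adjugate entries are cofactors
  have hadj : ∀ i j, M.adjugate j i = cof i j := by
    intro i j
    rw [hcof_def]
    exact Matrix.adjugate_fin_succ_eq_det_submatrix M j i
  -- integer column sums are 3
  have hcsum3 : ∀ j, ∑ i : Fin 5, M i j = 3 := by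
    intro j
    have h1 : ∑ i : Fin 5, M i j = ∑ i : Fin 5, if M i j = 1 then (1:ℤ) else 0 := by
      refine Finset.sum_congr rfl fun i _ => ?_
      rcases h01 i j with h | h <;> simp [h]
    rw [h1, ← Finset.sum_filter, Finset.sum_const, hT j]; simp
  -- full cofactor row sums equal ε
  have hcsum : ∀ i, ∑ j : Fin 5, cof i j = ε := by
    intro i
    have h1 : ∑ i' : Fin 5, (M * M.adjugate) i' i = M.det := by
      rw [Matrix.mul_adjugate]
      simp [Matrix.smul_apply, Matrix.one_apply, Finset.sum_ite_eq]
    have h2 : ∑ i' : Fin 5, (M * M.adjugate) i' i = 3 * ∑ j : Fin 5, cof i j := by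
      simp_rw [Matrix.mul_apply, hadj]
      rw [Finset.sum_comm, Finset.mul_sum]
      refine Finset.sum_congr rfl fun j _ => ?_
      rw [← Finset.sum_mul, hcsum3 j]
    rw [h2, hde] at h1
    exact mul_left_cancel₀ (by norm_num) h1
  -- zero sets of rows have card 2
  have hZcard : ∀ i, (Finset.univ.filter fun j => M i j = 0).card = 2 := by
    intro i
    have h1 := Finset.card_filter_add_card_filter_not
      (s := (Finset.univ : Finset (Fin 5))) (p := fun j => M i j = 1)
    have h2 : (Finset.univ.filter fun j => ¬ M i j = 1)
        = Finset.univ.filter fun j => M i j = 0 := by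
      apply Finset.filter_congr
      intro j _; rcases h01 i j with h | h <;> simp [h]
    rw [h2] at h1
    have h3 := hrow i
    simp only [Finset.card_univ, Fintype.card_fin] at h1
    omega
  -- sum of cofactors over zero set of a row is -2ε
  have hZsum : ∀ i, ∑ j ∈ Finset.univ.filter (fun j => M i j = 0), cof i j = -(2 * ε) := by
    intro i
    have h1 := Finset.sum_filter_add_sum_filter_not Finset.univ
      (fun j => M i j = 1) (cof i)
    have h2 : (Finset.univ.filter fun j => ¬ M i j = 1)
        = Finset.univ.filter fun j => M i j = 0 := by
      apply Finset.filter_congr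
      intro j _; rcases h01 i j with h | h <;> simp [h]
    rw [h2, hcsum i] at h1
    have h3 := hSsum i
    rw [hrow i] at h3
    rw [h3] at h1
    push_cast at h1
    linarith
  -- the two cofactors at zeros of a row have equal parity mod 2
  have hzz : ∀ i, ∀ a ∈ Finset.univ.filter (fun j => M i j = 0),
      ∀ b ∈ Finset.univ.filter (fun j => M i j = 0),
      ((cof i a : ℤ) : ZMod 2) = ((cof i b : ℤ) : ZMod 2) := by
    intro i
    obtain ⟨a, b, hab, hZeq⟩ := Finset.card_eq_two.mp (hZcard i)
    have hsum : ((cof i a : ℤ) : ZMod 2) + ((cof i b : ℤ) : ZMod 2) = 0 := by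
      have hc := congrArg (fun z : ℤ => (z : ZMod 2)) (hZsum i)
      rw [hZeq, Finset.sum_pair hab] at hc
      push_cast at hc
      rw [hc]
      have h2 : (2 : ZMod 2) = 0 := by decide
      rw [h2]; ring
    have heq : ((cof i a : ℤ) : ZMod 2) = ((cof i b : ℤ) : ZMod 2) :=
      (eq_neg_of_add_eq_zero_left hsum).trans (CharTwo.neg_eq _)
    intro x hx y hy
    rw [hZeq] at hx hy
    simp only [Finset.mem_insert, Finset.mem_singleton] at hx hy
    rcases hx with rfl | rfl <;> rcases hy with rfl | rfl <;> simp [heq]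
  -- orthogonality relations
  have horth : ∀ i i', i ≠ i' →
      ∑ j ∈ Finset.univ.filter (fun j => M i j = 1), cof i' j = 0 := by
    intro i i' hne
    have h1 : (M * M.adjugate) i i' = 0 := by
      rw [Matrix.mul_adjugate]
      simp [Matrix.smul_apply, Matrix.one_apply, hne]
    rw [Matrix.mul_apply] at h1
    simp_rw [hadj] at h1
    calc ∑ j ∈ Finset.univ.filter (fun j => M i j = 1), cof i' j
        = ∑ j : Fin 5, M i j * cof i' j := by
          rw [Finset.sum_filter]
          exact Finset.sum_congr rfl fun j _ => (hmul i j (cof i' j)).symm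
    _ = 0 := h1
  -- pairwise intersections of row supports are even
  have hx : ∀ i i', i ≠ i' →
      Even (((Finset.univ.filter fun j => M i j = 1)
        ∩ (Finset.univ.filter fun j => M i' j = 1)).card) := by
    intro i i' hne
    by_contra hodd
    rw [Nat.even_iff] at hodd
    have hodd' : Odd (((Finset.univ.filter fun j => M i j = 1)
        ∩ (Finset.univ.filter fun j => M i' j = 1)).card) := Nat.odd_iff.mpr (by omega)
    have h0 := Finset.sum_sdiff (f := cof i')
      (Finset.inter_subset_left (s₁ := Finset.univ.filter fun j => M i j = 1)
        (s₂ := Finset.univ.filter fun j => M i' j = 1))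
    rw [Finset.sdiff_inter_self_left, horth i i' hne] at h0
    have hinter : ∑ j ∈ (Finset.univ.filter fun j => M i j = 1)
        ∩ (Finset.univ.filter fun j => M i' j = 1), cof i' j
        = (((Finset.univ.filter fun j => M i j = 1)
          ∩ (Finset.univ.filter fun j => M i' j = 1)).card : ℤ) * ε := by
      rw [Finset.sum_congr rfl (fun j hj => hkey i' j
          (by have := (Finset.mem_inter.mp hj).2; simpa using this)),
        Finset.sum_const, nsmul_eq_mul]
    rw [hinter] at h0
    have hcast := congrArg (fun z : ℤ => (z : ZMod 2)) h0
    push_cast at hcast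
    rw [hεZ] at hcast
    have hdiffzero : ∑ j ∈ (Finset.univ.filter fun j => M i j = 1)
        \ (Finset.univ.filter fun j => M i' j = 1), ((cof i' j : ℤ) : ZMod 2) = 0 := by
      apply aux_even_sum
      · intro a ha b hb
        have hZa : a ∈ Finset.univ.filter fun j => M i' j = 0 := by
          have h := (Finset.mem_sdiff.mp ha).2
          simp only [Finset.mem_filter, Finset.mem_univ, true_and] at h ⊢
          rcases h01 i' a with hh | hh
          · exact hh
          · exact absurd hh h
        have hZb : b ∈ Finset.univ.filter fun j => M i' j = 0 := by
          have h := (Finset.mem_sdiff.mp hb).2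
          simp only [Finset.mem_filter, Finset.mem_univ, true_and] at h ⊢
          rcases h01 i' b with hh | hh
          · exact hh
          · exact absurd hh h
        exact hzz i' a hZa b hZb
      · have h1 := Finset.card_inter_add_card_sdiff
          (Finset.univ.filter fun j => M i j = 1) (Finset.univ.filter fun j => M i' j = 1)
        rw [hrow i] at h1
        rw [Nat.even_iff]; omega
    rw [hdiffzero, aux_cast_odd hodd'] at hcast
    simp at hcast
  -- intersections with row 0 support are ≥ 2
  have hge : ∀ i', i' ≠ 0 → 2 ≤ ((Finset.univ.filter fun j => M 0 j = 1)
      ∩ (Finset.univ.filter fun j => M i' j = 1)).card := by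
    intro i' hne
    have heven := hx 0 i' (Ne.symm hne)
    have hne0 : ((Finset.univ.filter fun j => M 0 j = 1)
        ∩ (Finset.univ.filter fun j => M i' j = 1)).card ≠ 0 := by
      intro h0
      have hdisj : Disjoint (Finset.univ.filter fun j => M 0 j = 1)
          (Finset.univ.filter fun j => M i' j = 1) :=
        Finset.disjoint_iff_inter_eq_empty.mpr (Finset.card_eq_zero.mp h0)
      have h1 : ((Finset.univ.filter fun j => M 0 j = 1)
          ∪ (Finset.univ.filter fun j => M i' j = 1)).card = 6 := by
        rw [Finset.card_union_of_disjoint hdisj, hrow, hrow]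
      have h2 := Finset.card_le_univ ((Finset.univ.filter fun j => M 0 j = 1)
          ∪ (Finset.univ.filter fun j => M i' j = 1))
      rw [h1] at h2
      simp at h2
    rw [Nat.even_iff] at heven; omega
  -- double counting
  have hcount : ∑ i' ∈ Finset.univ.erase 0, ((Finset.univ.filter fun j => M 0 j = 1)
      ∩ (Finset.univ.filter fun j => M i' j = 1)).card = 6 := by
    have step1 : ∀ i', ((Finset.univ.filter fun j => M 0 j = 1)
        ∩ (Finset.univ.filter fun j => M i' j = 1)).card
        = ∑ j ∈ Finset.univ.filter (fun j => M 0 j = 1), if M i' j = 1 then 1 else 0 := by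
      intro i'
      rw [← Finset.card_filter]
      congr 1
      ext j
      simp only [Finset.mem_inter, Finset.mem_filter, Finset.mem_univ, true_and]
    simp_rw [step1]
    rw [Finset.sum_comm]
    have step2 : ∀ j ∈ Finset.univ.filter (fun j => M 0 j = 1),
        (∑ i' ∈ Finset.univ.erase 0, if M i' j = 1 then 1 else 0) = 2 := by
      intro j hj
      rw [← Finset.card_filter, Finset.filter_erase]
      have h0T : (0 : Fin 5) ∈ Finset.univ.filter fun i => M i j = 1 := by
        simp only [Finset.mem_filter, Finset.mem_univ, true_and] at hj ⊢
        exact hj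
      rw [Finset.card_erase_of_mem h0T, hT j]
    rw [Finset.sum_congr rfl step2, Finset.sum_const, hrow 0]
    rfl
  have hcount2 : 8 ≤ ∑ i' ∈ Finset.univ.erase 0, ((Finset.univ.filter fun j => M 0 j = 1)
      ∩ (Finset.univ.filter fun j => M i' j = 1)).card := by
    calc (8:ℕ) = ∑ _i' ∈ (Finset.univ : Finset (Fin 5)).erase 0, 2 := by
          rw [Finset.sum_const, Finset.card_erase_of_mem (Finset.mem_univ 0)]
          decide
    _ ≤ _ := Finset.sum_le_sum fun i' hi' => hge i' (Finset.ne_of_mem_erase hi')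
  omega
end

section
/- The map from nonzero vectors of (ℤ/2)⁴ to ℤ⁵ sending x=(1,0,0,0)↦e₁, y=(0,1,0,0)↦e₂, x+y↦e₁+e₂, and for each of the three coset representatives a₁=(0,0,1,0), a₂=(0,0,0,1), a₃=(0,0,1,1): a_i↦e_{i+2}, a_i+x↦e₁+e_{i+2}, a_i+y↦e₂+e_{i+2}, a_i+x+y↦e₁+e₂+e_{i+2}, sends every linearly independent subset of (ℤ/2)⁴ \ {0} to a subset of ℤ⁵ that extends to a basis of ℤ⁵. -/
/-- The explicit coloring of the nonzero vectors of (ℤ/2)⁴ by vectors of ℤ⁵: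
the first two coordinates record v₁, v₂, and coordinates 3, 4, 5 record which of the
three cosets (given by (v₃,v₄) = (1,0), (0,1), (1,1)) the vector lies in. -/
def Lam (v : Fin 4 → ZMod 2) : Fin 5 → ℤ :=
  ![(if v 0 = 1 then 1 else 0),
    (if v 1 = 1 then 1 else 0),
    (if v 2 = 1 ∧ v 3 = 0 then 1 else 0),
    (if v 2 = 0 ∧ v 3 = 1 then 1 else 0),
    (if v 2 = 1 ∧ v 3 = 1 then 1 else 0)]

def uOk (d : ℤ) : Bool := d == 1 || d == -1

def dec (n : ℕ) : Fin 4 → ZMod 2 := ![(n : ZMod 2), ((n/2 : ℕ) : ZMod 2), ((n/4 : ℕ) : ZMod 2), ((n/8 : ℕ) : ZMod 2)]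

def enc (v : Fin 4 → ZMod 2) : ℕ := (v 0).val + 2 * (v 1).val + 4 * (v 2).val + 8 * (v 3).val

section
variable {α : Type*} [CommRing α]

def mA (p q r s : Fin 5 → α) : α :=
  (p 0 * q 1 - q 0 * p 1) * (r 2 * s 3 - s 2 * r 3) - (p 0 * r 1 - r 0 * p 1) * (q 2 * s 3 - s 2 * q 3) + (p 0 * s 1 - s 0 * p 1) * (q 2 * r 3 - r 2 * q 3) + (q 0 * r 1 - r 0 * q 1) * (p 2 * s 3 - s 2 * p 3) - (q 0 * s 1 - s 0 * q 1) * (p 2 * r 3 - r 2 * p 3) + (r 0 * s 1 - s 0 * r 1) * (p 2 * q 3 - q 2 * p 3)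

def mB (p q r s : Fin 5 → α) : α :=
  (p 0 * q 1 - q 0 * p 1) * (r 2 * s 4 - s 2 * r 4) - (p 0 * r 1 - r 0 * p 1) * (q 2 * s 4 - s 2 * q 4) + (p 0 * s 1 - s 0 * p 1) * (q 2 * r 4 - r 2 * q 4) + (q 0 * r 1 - r 0 * q 1) * (p 2 * s 4 - s 2 * p 4) - (q 0 * s 1 - s 0 * q 1) * (p 2 * r 4 - r 2 * p 4) + (r 0 * s 1 - s 0 * r 1) * (p 2 * q 4 - q 2 * p 4)

def mC (p q r s : Fin 5 → α) : α :=
  (p 0 * q 1 - q 0 * p 1) * (r 3 * s 4 - s 3 * r 4) - (p 0 * r 1 - r 0 * p 1) * (q 3 * s 4 - s 3 * q 4) + (p 0 * s 1 - s 0 * p 1) * (q 3 * r 4 - r 3 * q 4) + (q 0 * r 1 - r 0 * q 1) * (p 3 * s 4 - s 3 * p 4) - (q 0 * s 1 - s 0 * q 1) * (p 3 * r 4 - r 3 * p 4) + (r 0 * s 1 - s 0 * r 1) * (p 3 * q 4 - q 3 * p 4)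

end

def go (p q r s : Fin 5 → ℤ) : Bool :=
  let t0 := p 0 * q 1 - q 0 * p 1
  let t1 := p 0 * r 1 - r 0 * p 1
  let t2 := p 0 * s 1 - s 0 * p 1
  let t3 := q 0 * r 1 - r 0 * q 1
  let t4 := q 0 * s 1 - s 0 * q 1
  let t5 := r 0 * s 1 - s 0 * r 1
  let a := t0 * (r 2 * s 3 - s 2 * r 3) - t1 * (q 2 * s 3 - s 2 * q 3) + t2 * (q 2 * r 3 - r 2 * q 3) + t3 * (p 2 * s 3 - s 2 * p 3) - t4 * (p 2 * r 3 - r 2 * p 3) + t5 * (p 2 * q 3 - q 2 * p 3)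
  let b := t0 * (r 2 * s 4 - s 2 * r 4) - t1 * (q 2 * s 4 - s 2 * q 4) + t2 * (q 2 * r 4 - r 2 * q 4) + t3 * (p 2 * s 4 - s 2 * p 4) - t4 * (p 2 * r 4 - r 2 * p 4) + t5 * (p 2 * q 4 - q 2 * p 4)
  let c := t0 * (r 3 * s 4 - s 3 * r 4) - t1 * (q 3 * s 4 - s 3 * q 4) + t2 * (q 3 * r 4 - r 3 * q 4) + t3 * (p 3 * s 4 - s 3 * p 4) - t4 * (p 3 * r 4 - r 3 * p 4) + t5 * (p 3 * q 4 - q 3 * p 4)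
  ((a + b - c) % 2 == 0) || uOk a || uOk b || uOk c

def chk (a b c d : ℕ) : Bool := go (Lam (dec a)) (Lam (dec b)) (Lam (dec c)) (Lam (dec d))

theorem go_spec (p q r s : Fin 5 → ℤ) : go p q r s =
    (((mA p q r s + mB p q r s - mC p q r s) % 2 == 0) || uOk (mA p q r s)
      || uOk (mB p q r s) || uOk (mC p q r s)) := rfl

set_option maxHeartbeats 1000000 in
theorem det_fin_four {R : Type*} [CommRing R] (A : Matrix (Fin 4) (Fin 4) R) :
    A.det = A 0 0 * A 1 1 * A 2 2 * A 3 3 - A 0 0 * A 1 1 * A 2 3 * A 3 2 - A 0 0 * A 1 2 * A 2 1 * A 3 3 + A 0 0 * A 1 2 * A 2 3 * A 3 1 + A 0 0 * A 1 3 * A 2 1 * A 3 2 - A 0 0 * A 1 3 * A 2 2 * A 3 1 - A 0 1 * A 1 0 * A 2 2 * A 3 3 + A 0 1 * A 1 0 * A 2 3 * A 3 2 + A 0 1 * A 1 2 * A 2 0 * A 3 3 - A 0 1 * A 1 2 * A 2 3 * A 3 0 - A 0 1 * A 1 3 * A 2 0 * A 3 2 + A 0 1 * A 1 3 * A 2 2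 * A 3 0 + A 0 2 * A 1 0 * A 2 1 * A 3 3 - A 0 2 * A 1 0 * A 2 3 * A 3 1 - A 0 2 * A 1 1 * A 2 0 * A 3 3 + A 0 2 * A 1 1 * A 2 3 * A 3 0 + A 0 2 * A 1 3 * A 2 0 * A 3 1 - A 0 2 * A 1 3 * A 2 1 * A 3 0 - A 0 3 * A 1 0 * A 2 1 * A 3 2 + A 0 3 * A 1 0 * A 2 2 * A 3 1 + A 0 3 * A 1 1 * A 2 0 * A 3 2 - A 0 3 * A 1 1 * A 2 2 * A 3 0 - A 0 3 * A 1 2 * A 2 0 * A 3 1 + A 0 3 * A 1 2 * A 2 1 * A 3 0 := by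
  rw [Matrix.det_succ_row_zero]
  simp only [Fin.sum_univ_four, Matrix.submatrix_apply, Matrix.det_fin_three, show (((0 : Fin 4)) : ℕ) = 0 from rfl, show (((1 : Fin 4)) : ℕ) = 1 from rfl, show (((2 : Fin 4)) : ℕ) = 2 from rfl, show (((3 : Fin 4)) : ℕ) = 3 from rfl,
    show (Fin.succ 0 : Fin 4) = 1 from rfl, show (Fin.succ 1 : Fin 4) = 2 from rfl, show (Fin.succ 2 : Fin 4) = 3 from rfl, show Fin.succAbove (0 : Fin 4) (0 : Fin 3) = 1 from rfl, show Fin.succAbove (0 : Fin 4) (1 : Fin 3) = 2 from rfl, show Fin.succAbove (0 : Fin 4) (2 : Fin 3) = 3 from rfl, show Fin.succAbove (1 : Fin 4) (0 : Fin 3) = 0 from rfl, show Fin.succAbove (1 : Fin 4) (1 : Fin 3) = 2 from rfl, show Fin.succAbove (1 : Fin 4) (2 : Fin 3) = 3 from rfl, show Fin.succAbove (2 : Fin 4) (0 : Fin 3) = 0 from rfl, show Fin.succAbove (2 : Fin 4) (1 : Fin 3) = 1 from rfl, show Fin.succAbove (2 : Fin 4) (2 : Fin 3) = 3 from rfl,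 show Fin.succAbove (3 : Fin 4) (0 : Fin 3) = 0 from rfl, show Fin.succAbove (3 : Fin 4) (1 : Fin 3) = 1 from rfl, show Fin.succAbove (3 : Fin 4) (2 : Fin 3) = 2 from rfl]
  norm_num
  ring

set_option maxHeartbeats 4000000 in
theorem det_fin_five {R : Type*} [CommRing R] (A : Matrix (Fin 5) (Fin 5) R) :
    A.det = A 0 0 * A 1 1 * A 2 2 * A 3 3 * A 4 4 - A 0 0 * A 1 1 * A 2 2 * A 3 4 * A 4 3 - A 0 0 * A 1 1 * A 2 3 * A 3 2 * A 4 4 + A 0 0 * A 1 1 * A 2 3 * A 3 4 * A 4 2 + A 0 0 * A 1 1 * A 2 4 * A 3 2 * A 4 3 - A 0 0 * A 1 1 * A 2 4 * A 3 3 * A 4 2 - A 0 0 * A 1 2 * A 2 1 * A 3 3 * A 4 4 + A 0 0 * A 1 2 * A 2 1 * A 3 4 * A 4 3 + A 0 0 * A 1 2 * A 2 3 * A 3 1 * A 4 4 - A 0 0 * A 1 2 * A 2 3 * A 3 4 * A 4 1 - A 0 0 * A 1 2 * A 2 4 * A 3 1 * A 4 3 + A 0 0 * A 1 2 * A 2 4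 * A 3 3 * A 4 1 + A 0 0 * A 1 3 * A 2 1 * A 3 2 * A 4 4 - A 0 0 * A 1 3 * A 2 1 * A 3 4 * A 4 2 - A 0 0 * A 1 3 * A 2 2 * A 3 1 * A 4 4 + A 0 0 * A 1 3 * A 2 2 * A 3 4 * A 4 1 + A 0 0 * A 1 3 * A 2 4 * A 3 1 * A 4 2 - A 0 0 * A 1 3 * A 2 4 * A 3 2 * A 4 1 - A 0 0 * A 1 4 * A 2 1 * A 3 2 * A 4 3 + A 0 0 * A 1 4 * A 2 1 * A 3 3 * A 4 2 + A 0 0 * A 1 4 * A 2 2 * A 3 1 * A 4 3 - A 0 0 * A 1 4 * A 2 2 * A 3 3 * A 4 1 - A 0 0 * A 1 4 * A 2 3 * A 3 1 * A 4 2 + A 0 0 * A 1 4 * A 2 3 * A 3 2 * A 4 1 - A 0 1 * A 1 0 * A 2 2 * A 3 3 * A 4 4 + A 0 1 * A 1 0 * A 2 2 * A 3 4 * A 4 3 + A 0 1 * A 1 0 * A 2 3 * A 3 2 * A 4 4 - A 0 1 * A 1 0 * A 2 3 * A 3 4 * A 4 2 - A 0 1 * A 1 0 * A 2 4 * A 3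 2 * A 4 3 + A 0 1 * A 1 0 * A 2 4 * A 3 3 * A 4 2 + A 0 1 * A 1 2 * A 2 0 * A 3 3 * A 4 4 - A 0 1 * A 1 2 * A 2 0 * A 3 4 * A 4 3 - A 0 1 * A 1 2 * A 2 3 * A 3 0 * A 4 4 + A 0 1 * A 1 2 * A 2 3 * A 3 4 * A 4 0 + A 0 1 * A 1 2 * A 2 4 * A 3 0 * A 4 3 - A 0 1 * A 1 2 * A 2 4 * A 3 3 * A 4 0 - A 0 1 * A 1 3 * A 2 0 * A 3 2 * A 4 4 + A 0 1 * A 1 3 * A 2 0 * A 3 4 * A 4 2 + A 0 1 * A 1 3 * A 2 2 * A 3 0 * A 4 4 - A 0 1 * A 1 3 * A 2 2 * A 3 4 * A 4 0 - A 0 1 * A 1 3 * A 2 4 * A 3 0 * A 4 2 + A 0 1 * A 1 3 * A 2 4 * A 3 2 * A 4 0 + A 0 1 * A 1 4 * A 2 0 * A 3 2 * A 4 3 - A 0 1 * A 1 4 * A 2 0 * A 3 3 * A 4 2 - A 0 1 * A 1 4 * A 2 2 * A 3 0 * A 4 3 + A 0 1 * A 1 4 * A 2 2 * A 3 3 * A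 4 0 + A 0 1 * A 1 4 * A 2 3 * A 3 0 * A 4 2 - A 0 1 * A 1 4 * A 2 3 * A 3 2 * A 4 0 + A 0 2 * A 1 0 * A 2 1 * A 3 3 * A 4 4 - A 0 2 * A 1 0 * A 2 1 * A 3 4 * A 4 3 - A 0 2 * A 1 0 * A 2 3 * A 3 1 * A 4 4 + A 0 2 * A 1 0 * A 2 3 * A 3 4 * A 4 1 + A 0 2 * A 1 0 * A 2 4 * A 3 1 * A 4 3 - A 0 2 * A 1 0 * A 2 4 * A 3 3 * A 4 1 - A 0 2 * A 1 1 * A 2 0 * A 3 3 * A 4 4 + A 0 2 * A 1 1 * A 2 0 * A 3 4 * A 4 3 + A 0 2 * A 1 1 * A 2 3 * A 3 0 * A 4 4 - A 0 2 * A 1 1 * A 2 3 * A 3 4 * A 4 0 - A 0 2 * A 1 1 * A 2 4 * A 3 0 * A 4 3 + A 0 2 * A 1 1 * A 2 4 * A 3 3 * A 4 0 + A 0 2 * A 1 3 * A 2 0 * A 3 1 * A 4 4 - A 0 2 * A 1 3 * A 2 0 * A 3 4 * A 4 1 - A 0 2 * A 1 3 * A 2 1 * A 3 0 * A 4 4 +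 A 0 2 * A 1 3 * A 2 1 * A 3 4 * A 4 0 + A 0 2 * A 1 3 * A 2 4 * A 3 0 * A 4 1 - A 0 2 * A 1 3 * A 2 4 * A 3 1 * A 4 0 - A 0 2 * A 1 4 * A 2 0 * A 3 1 * A 4 3 + A 0 2 * A 1 4 * A 2 0 * A 3 3 * A 4 1 + A 0 2 * A 1 4 * A 2 1 * A 3 0 * A 4 3 - A 0 2 * A 1 4 * A 2 1 * A 3 3 * A 4 0 - A 0 2 * A 1 4 * A 2 3 * A 3 0 * A 4 1 + A 0 2 * A 1 4 * A 2 3 * A 3 1 * A 4 0 - A 0 3 * A 1 0 * A 2 1 * A 3 2 * A 4 4 + A 0 3 * A 1 0 * A 2 1 * A 3 4 * A 4 2 + A 0 3 * A 1 0 * A 2 2 * A 3 1 * A 4 4 - A 0 3 * A 1 0 * A 2 2 * A 3 4 * A 4 1 - A 0 3 * A 1 0 * A 2 4 * A 3 1 * A 4 2 + A 0 3 * A 1 0 * A 2 4 * A 3 2 * A 4 1 + A 0 3 * A 1 1 * A 2 0 * A 3 2 * A 4 4 - A 0 3 * A 1 1 * A 2 0 * A 3 4 * A 4 2 - A 0 3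 * A 1 1 * A 2 2 * A 3 0 * A 4 4 + A 0 3 * A 1 1 * A 2 2 * A 3 4 * A 4 0 + A 0 3 * A 1 1 * A 2 4 * A 3 0 * A 4 2 - A 0 3 * A 1 1 * A 2 4 * A 3 2 * A 4 0 - A 0 3 * A 1 2 * A 2 0 * A 3 1 * A 4 4 + A 0 3 * A 1 2 * A 2 0 * A 3 4 * A 4 1 + A 0 3 * A 1 2 * A 2 1 * A 3 0 * A 4 4 - A 0 3 * A 1 2 * A 2 1 * A 3 4 * A 4 0 - A 0 3 * A 1 2 * A 2 4 * A 3 0 * A 4 1 + A 0 3 * A 1 2 * A 2 4 * A 3 1 * A 4 0 + A 0 3 * A 1 4 * A 2 0 * A 3 1 * A 4 2 - A 0 3 * A 1 4 * A 2 0 * A 3 2 * A 4 1 - A 0 3 * A 1 4 * A 2 1 * A 3 0 * A 4 2 + A 0 3 * A 1 4 * A 2 1 * A 3 2 * A 4 0 + A 0 3 * A 1 4 * A 2 2 * A 3 0 * A 4 1 - A 0 3 * A 1 4 * A 2 2 * A 3 1 * A 4 0 + A 0 4 * A 1 0 * A 2 1 * A 3 2 * A 4 3 - A 0 4 * A 1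 0 * A 2 1 * A 3 3 * A 4 2 - A 0 4 * A 1 0 * A 2 2 * A 3 1 * A 4 3 + A 0 4 * A 1 0 * A 2 2 * A 3 3 * A 4 1 + A 0 4 * A 1 0 * A 2 3 * A 3 1 * A 4 2 - A 0 4 * A 1 0 * A 2 3 * A 3 2 * A 4 1 - A 0 4 * A 1 1 * A 2 0 * A 3 2 * A 4 3 + A 0 4 * A 1 1 * A 2 0 * A 3 3 * A 4 2 + A 0 4 * A 1 1 * A 2 2 * A 3 0 * A 4 3 - A 0 4 * A 1 1 * A 2 2 * A 3 3 * A 4 0 - A 0 4 * A 1 1 * A 2 3 * A 3 0 * A 4 2 + A 0 4 * A 1 1 * A 2 3 * A 3 2 * A 4 0 + A 0 4 * A 1 2 * A 2 0 * A 3 1 * A 4 3 - A 0 4 * A 1 2 * A 2 0 * A 3 3 * A 4 1 - A 0 4 * A 1 2 * A 2 1 * A 3 0 * A 4 3 + A 0 4 * A 1 2 * A 2 1 * A 3 3 * A 4 0 + A 0 4 * A 1 2 * A 2 3 * A 3 0 * A 4 1 - A 0 4 * A 1 2 * A 2 3 * A 3 1 * A 4 0 - A 0 4 * A 1 3 * A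 2 0 * A 3 1 * A 4 2 + A 0 4 * A 1 3 * A 2 0 * A 3 2 * A 4 1 + A 0 4 * A 1 3 * A 2 1 * A 3 0 * A 4 2 - A 0 4 * A 1 3 * A 2 1 * A 3 2 * A 4 0 - A 0 4 * A 1 3 * A 2 2 * A 3 0 * A 4 1 + A 0 4 * A 1 3 * A 2 2 * A 3 1 * A 4 0 := by
  rw [Matrix.det_succ_row_zero]
  simp only [Fin.sum_univ_five, Matrix.submatrix_apply, det_fin_four, show (((0 : Fin 5)) : ℕ) = 0 from rfl, show (((1 : Fin 5)) : ℕ) = 1 from rfl, show (((2 : Fin 5)) : ℕ) = 2 from rfl, show (((3 : Fin 5)) : ℕ) = 3 from rfl, show (((4 : Fin 5)) : ℕ) = 4 from rfl,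
    show (Fin.succ 0 : Fin 5) = 1 from rfl, show (Fin.succ 1 : Fin 5) = 2 from rfl, show (Fin.succ 2 : Fin 5) = 3 from rfl, show (Fin.succ 3 : Fin 5) = 4 from rfl, show Fin.succAbove (0 : Fin 5) (0 : Fin 4) = 1 from rfl, show Fin.succAbove (0 : Fin 5) (1 : Fin 4) = 2 from rfl, show Fin.succAbove (0 : Fin 5) (2 : Fin 4) = 3 from rfl, show Fin.succAbove (0 : Fin 5) (3 : Fin 4) = 4 from rfl, show Fin.succAbove (1 : Fin 5) (0 : Fin 4) = 0 from rfl, show Fin.succAbove (1 : Fin 5) (1 : Fin 4) = 2 from rfl, show Fin.succAbove (1 : Fin 5) (2 : Fin 4) = 3 from rfl, show Fin.succAbove (1 : Fin 5) (3 : Fin 4) = 4 from rfl, show Fin.succAbove (2 : Fin 5) (0 : Fin 4) = 0 from rfl, show Fin.succAbove (2 : Fin 5) (1 : Fin 4) = 1 from rfl, show Fin.succAbove (2 : Fin 5) (2 : Fin 4) = 3 from rfl, show Fin.succAbove (2 : Fin 5) (3 : Fin 4) = 4 from rfl, show Fin.succAbove (3 : Fin 5) (0 : Fin 4) = 0 from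 rfl, show Fin.succAbove (3 : Fin 5) (1 : Fin 4) = 1 from rfl, show Fin.succAbove (3 : Fin 5) (2 : Fin 4) = 2 from rfl, show Fin.succAbove (3 : Fin 5) (3 : Fin 4) = 4 from rfl, show Fin.succAbove (4 : Fin 5) (0 : Fin 4) = 0 from rfl, show Fin.succAbove (4 : Fin 5) (1 : Fin 4) = 1 from rfl, show Fin.succAbove (4 : Fin 5) (2 : Fin 4) = 2 from rfl, show Fin.succAbove (4 : Fin 5) (3 : Fin 4) = 3 from rfl]
  norm_num
  ring

set_option maxHeartbeats 1000000 in
theorem detA (p q r s : Fin 5 → ℤ) :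
    (Matrix.of fun i j => (![p, q, r, s, ![0,0,0,0,1]] : Fin 5 → Fin 5 → ℤ) j i).det
      = mA p q r s := by
  rw [det_fin_five]
  simp only [Matrix.of_apply, show (![p, q, r, s, (![0,0,0,0,1] : Fin 5 → ℤ)] : Fin 5 → Fin 5 → ℤ) 0 = p from rfl, show (![p, q, r, s, (![0,0,0,0,1] : Fin 5 → ℤ)] : Fin 5 → Fin 5 → ℤ) 1 = q from rfl, show (![p, q, r, s, (![0,0,0,0,1] : Fin 5 → ℤ)] : Fin 5 → Fin 5 → ℤ) 2 = r from rfl, show (![p, q, r, s, (![0,0,0,0,1] : Fin 5 → ℤ)] : Fin 5 → Fin 5 → ℤ) 3 = s from rfl, show (![p, q, r, s, (![0,0,0,0,1] : Fin 5 → ℤ)] : Fin 5 → Fin 5 → ℤ) 4 = (![0,0,0,0,1] : Fin 5 → ℤ) from rfl, show (![0,0,0,0,1] : Fin 5 → ℤ) 0 = 0 from rfl, show (![0,0,0,0,1] : Fin 5 → ℤ) 1 = 0 from rfl, show (![0,0,0,0,1] : Fin 5 → ℤ) 2 = 0 from rfl, show (![0,0,0,0,1] : Fin 5 → ℤ) 3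 = 0 from rfl, show (![0,0,0,0,1] : Fin 5 → ℤ) 4 = 1 from rfl]
  simp only [mA]
  ring

set_option maxHeartbeats 1000000 in
theorem detB (p q r s : Fin 5 → ℤ) :
    (Matrix.of fun i j => (![p, q, r, s, ![0,0,0,1,0]] : Fin 5 → Fin 5 → ℤ) j i).det
      = - mB p q r s := by
  rw [det_fin_five]
  simp only [Matrix.of_apply, show (![p, q, r, s, (![0,0,0,1,0] : Fin 5 → ℤ)] : Fin 5 → Fin 5 → ℤ) 0 = p from rfl, show (![p, q, r, s, (![0,0,0,1,0] : Fin 5 → ℤ)] : Fin 5 → Fin 5 → ℤ) 1 = q from rfl, show (![p, q, r, s, (![0,0,0,1,0] : Fin 5 → ℤ)] : Fin 5 → Fin 5 → ℤ) 2 = r from rfl, show (![p, q, r, s, (![0,0,0,1,0] : Fin 5 → ℤ)] : Fin 5 → Fin 5 → ℤ) 3 = s from rfl, show (![p, q, r, s, (![0,0,0,1,0] : Fin 5 → ℤ)] : Fin 5 → Fin 5 → ℤ) 4 = (![0,0,0,1,0] : Fin 5 → ℤ) from rfl, show (![0,0,0,1,0] : Fin 5 → ℤ) 0 = 0 from rfl,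 show (![0,0,0,1,0] : Fin 5 → ℤ) 1 = 0 from rfl, show (![0,0,0,1,0] : Fin 5 → ℤ) 2 = 0 from rfl, show (![0,0,0,1,0] : Fin 5 → ℤ) 3 = 1 from rfl, show (![0,0,0,1,0] : Fin 5 → ℤ) 4 = 0 from rfl]
  simp only [mB]
  ring

set_option maxHeartbeats 1000000 in
theorem detC (p q r s : Fin 5 → ℤ) :
    (Matrix.of fun i j => (![p, q, r, s, ![0,0,1,0,0]] : Fin 5 → Fin 5 → ℤ) j i).det
      = mC p q r s := by
  rw [det_fin_five]
  simp only [Matrix.of_apply, show (![p, q, r, s, (![0,0,1,0,0] : Fin 5 → ℤ)] : Fin 5 → Fin 5 → ℤ) 0 = p from rfl, show (![p, q, r, s, (![0,0,1,0,0] : Fin 5 → ℤ)] : Fin 5 → Fin 5 → ℤ) 1 = q from rfl, show (![p, q, r, s, (![0,0,1,0,0] : Fin 5 → ℤ)] : Fin 5 → Fin 5 → ℤ) 2 = r from rfl, show (![p, q, r, s, (![0,0,1,0,0] : Fin 5 → ℤ)] : Fin 5 → Fin 5 → ℤ) 3 = s from rfl, show (![p, q, r, s, (![0,0,1,0,0]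 : Fin 5 → ℤ)] : Fin 5 → Fin 5 → ℤ) 4 = (![0,0,1,0,0] : Fin 5 → ℤ) from rfl, show (![0,0,1,0,0] : Fin 5 → ℤ) 0 = 0 from rfl, show (![0,0,1,0,0] : Fin 5 → ℤ) 1 = 0 from rfl, show (![0,0,1,0,0] : Fin 5 → ℤ) 2 = 1 from rfl, show (![0,0,1,0,0] : Fin 5 → ℤ) 3 = 0 from rfl, show (![0,0,1,0,0] : Fin 5 → ℤ) 4 = 0 from rfl]
  simp only [mC]
  ring

set_option maxHeartbeats 1000000 in
theorem poly_id {α : Type*} [CommRing α] (p q r s : Fin 5 → α) :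
    mA p q r s + mB p q r s - mC p q r s =
      (Matrix.of (![![p 0, q 0, r 0, s 0], ![p 1, q 1, r 1, s 1], ![p 2 + p 4, q 2 + q 4, r 2 + r 4, s 2 + s 4], ![p 3 + p 4, q 3 + q 4, r 3 + r 4, s 3 + s 4]] : Fin 4 → Fin 4 → α)).det := by
  rw [det_fin_four]
  simp only [Matrix.of_apply, show (![![p 0, q 0, r 0, s 0], ![p 1, q 1, r 1, s 1], ![p 2 + p 4, q 2 + q 4, r 2 + r 4, s 2 + s 4], ![p 3 + p 4, q 3 + q 4, r 3 + r 4, s 3 + s 4]] : Fin 4 → Fin 4 → α) 0 = (![p 0, q 0, r 0, s 0] : Fin 4 → α) from rfl, show (![p 0, q 0, r 0, s 0] : Fin 4 → α) 0 = p 0 from rfl, show (![p 0, q 0, r 0, s 0] : Fin 4 → α) 1 = q 0 from rfl, show (![p 0, q 0, r 0, s 0] : Fin 4 → α) 2 = r 0 from rfl, show (![p 0, q 0, r 0, s 0] : Fin 4 → α) 3 = s 0 from rfl, show (![![p 0, q 0, r 0, s 0], ![p 1, q 1, r 1, s 1], ![p 2 + p 4, q 2 + q 4, r 2 + r 4, s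 2 + s 4], ![p 3 + p 4, q 3 + q 4, r 3 + r 4, s 3 + s 4]] : Fin 4 → Fin 4 → α) 1 = (![p 1, q 1, r 1, s 1] : Fin 4 → α) from rfl, show (![p 1, q 1, r 1, s 1] : Fin 4 → α) 0 = p 1 from rfl, show (![p 1, q 1, r 1, s 1] : Fin 4 → α) 1 = q 1 from rfl, show (![p 1, q 1, r 1, s 1] : Fin 4 → α) 2 = r 1 from rfl, show (![p 1, q 1, r 1, s 1] : Fin 4 → α) 3 = s 1 from rfl, show (![![p 0, q 0, r 0, s 0], ![p 1, q 1, r 1, s 1], ![p 2 + p 4, q 2 + q 4, r 2 + r 4, s 2 + s 4], ![p 3 + p 4, q 3 + q 4, r 3 + r 4, s 3 + s 4]] : Fin 4 → Fin 4 → α) 2 = (![p 2 + p 4, q 2 + q 4, r 2 + r 4, s 2 + s 4] : Fin 4 → α) from rfl, show (![p 2 + p 4, q 2 + q 4, r 2 + r 4, s 2 + s 4] : Fin 4 → α) 0 = p 2 + p 4 from rfl, show (![p 2 + p 4, q 2 + q 4, r 2 + r 4, s 2 + s 4] : Fin 4 → α) 1 = q 2 + q 4 from rfl, show (![p 2 +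 p 4, q 2 + q 4, r 2 + r 4, s 2 + s 4] : Fin 4 → α) 2 = r 2 + r 4 from rfl, show (![p 2 + p 4, q 2 + q 4, r 2 + r 4, s 2 + s 4] : Fin 4 → α) 3 = s 2 + s 4 from rfl, show (![![p 0, q 0, r 0, s 0], ![p 1, q 1, r 1, s 1], ![p 2 + p 4, q 2 + q 4, r 2 + r 4, s 2 + s 4], ![p 3 + p 4, q 3 + q 4, r 3 + r 4, s 3 + s 4]] : Fin 4 → Fin 4 → α) 3 = (![p 3 + p 4, q 3 + q 4, r 3 + r 4, s 3 + s 4] : Fin 4 → α) from rfl, show (![p 3 + p 4, q 3 + q 4, r 3 + r 4, s 3 + s 4] : Fin 4 → α) 0 = p 3 + p 4 from rfl, show (![p 3 + p 4, q 3 + q 4, r 3 + r 4, s 3 + s 4] : Fin 4 → α) 1 = q 3 + q 4 from rfl, show (![p 3 + p 4, q 3 + q 4, r 3 + r 4, s 3 + s 4] : Fin 4 → α) 2 = r 3 + r 4 from rfl, show (![p 3 + p 4, q 3 + q 4, r 3 + r 4, s 3 + s 4] : Fin 4 → α) 3 = s 3 + s 4 from rfl]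
  simp only [mA, mB, mC]
  ring

theorem mcast (p q r s : Fin 5 → ℤ) :
    ((mA p q r s + mB p q r s - mC p q r s : ℤ) : ZMod 2) =
      mA (fun i => ((p i : ℤ) : ZMod 2)) (fun i => ((q i : ℤ) : ZMod 2))
        (fun i => ((r i : ℤ) : ZMod 2)) (fun i => ((s i : ℤ) : ZMod 2))
      + mB (fun i => ((p i : ℤ) : ZMod 2)) (fun i => ((q i : ℤ) : ZMod 2))
        (fun i => ((r i : ℤ) : ZMod 2)) (fun i => ((s i : ℤ) : ZMod 2))
      - mC (fun i => ((p i : ℤ) : ZMod 2)) (fun i => ((q i : ℤ) : ZMod 2))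
        (fun i => ((r i : ℤ) : ZMod 2)) (fun i => ((s i : ℤ) : ZMod 2)) := by
  simp only [mA, mB, mC]
  push_cast
  ring

theorem cast0 : ∀ v : Fin 4 → ZMod 2, ((Lam v 0 : ℤ) : ZMod 2) = v 0 := by decide
theorem cast1 : ∀ v : Fin 4 → ZMod 2, ((Lam v 1 : ℤ) : ZMod 2) = v 1 := by decide
theorem cast2 : ∀ v : Fin 4 → ZMod 2, ((Lam v 2 : ℤ) : ZMod 2) + ((Lam v 4 : ℤ) : ZMod 2) = v 2 := by decide
theorem cast3 : ∀ v : Fin 4 → ZMod 2, ((Lam v 3 : ℤ) : ZMod 2) + ((Lam v 4 : ℤ) : ZMod 2) = v 3 := by decide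

theorem dec_enc : ∀ v : Fin 4 → ZMod 2, dec (enc v) = v := by
  intro v; funext i; revert i; revert v; decide

theorem enc_lt : ∀ v : Fin 4 → ZMod 2, enc v < 16 := by decide

set_option maxRecDepth 100000 in
set_option maxHeartbeats 40000000 in
theorem chk_all : ((List.range 16).all fun a =>
    (List.range (15 - a)).all fun i =>
      (List.range (14 - a - i)).all fun j =>
        (List.range (13 - a - i - j)).all fun k =>
          chk a (a+1+i) (a+2+i+j) (a+3+i+j+k)) = true := by decide

theorem chk_lt (a b c d : ℕ) (hab : a < b) (hbc : b < c) (hcd : c < d) (hd : d < 16) :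
    chk a b c d = true := by
  have h := chk_all
  simp only [List.all_eq_true, List.mem_range] at h
  have h2 := h a (by omega) (b - a - 1) (by omega) (c - b - 1) (by omega) (d - c - 1) (by omega)
  have e1 : a + 1 + (b - a - 1) = b := by omega
  have e2 : a + 2 + (b - a - 1) + (c - b - 1) = c := by omega
  have e3 : a + 3 + (b - a - 1) + (c - b - 1) + (d - c - 1) = d := by omega
  rwa [e1, e2, e3] at h2

theorem basis_of_isUnit (N : Fin 5 → Fin 5 → ℤ)
    (h : IsUnit (Matrix.of fun i j => N j i).det) :
    ∃ b : Module.Basis (Fin 5) ℤ (Fin 5 → ℤ), ∀ j, N j ∈ Set.range ⇑b := by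
  have htm : (Pi.basisFun ℤ (Fin 5)).toMatrix N = Matrix.of fun i j => N j i := by
    ext i j
    simp [Module.Basis.toMatrix_apply]
  have hdet : IsUnit ((Pi.basisFun ℤ (Fin 5)).det N) := by
    rw [Module.Basis.det_apply, htm]; exact h
  obtain ⟨hli, hsp⟩ := (Module.Basis.is_basis_iff_det _).2 hdet
  exact ⟨Module.Basis.mk hli hsp.ge, fun j => ⟨j, Module.Basis.mk_apply hli hsp.ge j⟩⟩

theorem uOk_isUnit {d : ℤ} (h : uOk d = true) : IsUnit d := by
  have h2 : d = 1 ∨ d = -1 := by simpa [uOk] using h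
  rcases h2 with h1 | h1 <;> rw [h1]
  · exact isUnit_one
  · exact isUnit_one.neg

/-- The map `Lam` sends every linearly independent subset of (ℤ/2)⁴ \ {0} to a subset
of ℤ⁵ extending to a ℤ-basis of ℤ⁵. -/
theorem stmt_17 (s : Finset (Fin 4 → ZMod 2))
    (hs : LinearIndependent (ZMod 2) (fun v : s => (v : Fin 4 → ZMod 2))) :
    ∃ b : Module.Basis (Fin 5) ℤ (Fin 5 → ℤ), ∀ v ∈ s, Lam v ∈ Set.range ⇑b := by
  classical
  have hs1 : LinearIndepOn (ZMod 2) id (s : Set (Fin 4 → ZMod 2)) := hs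
  have hst : (s : Set (Fin 4 → ZMod 2)) ⊆ hs1.extend (Set.subset_univ _) := hs1.subset_extend _
  set tset := hs1.extend (Set.subset_univ _) with htset
  let B : Module.Basis tset (ZMod 2) (Fin 4 → ZMod 2) := Module.Basis.extend hs1
  haveI : Fintype tset := FiniteDimensional.fintypeBasisIndex B
  have hcard : Fintype.card tset = 4 := by
    have h1 := Module.finrank_eq_card_basis B
    rw [Module.finrank_pi] at h1
    simpa using h1.symm
  have hencinj : Function.Injective enc := fun x y h => by
    have h2 := congrArg dec h
    rwa [dec_enc, dec_enc] at h2
  have hucard : (tset.toFinset.image enc).card = 4 := by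
    rw [Finset.card_image_of_injective _ hencinj, Set.toFinset_card, hcard]
  set φ := (tset.toFinset.image enc).orderIsoOfFin hucard with hφ
  set M : Fin 4 → Fin 4 → ZMod 2 := fun i => dec (φ i : ℕ) with hM
  have hMmem : ∀ i, M i ∈ tset ∧ enc (M i) = (φ i : ℕ) := by
    intro i
    obtain ⟨x, hx, hex⟩ := Finset.mem_image.1 (φ i).2
    rw [Set.mem_toFinset] at hx
    constructor
    · show dec (φ i : ℕ) ∈ tset
      rw [← hex, dec_enc]; exact hx
    · show enc (dec (φ i : ℕ)) = (φ i : ℕ)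
      rw [← hex, dec_enc]
  let ψ : Fin 4 → tset := fun i => ⟨M i, (hMmem i).1⟩
  have hψinj : Function.Injective ψ := by
    intro i j hij
    have h2 : M i = M j := congrArg Subtype.val hij
    have h3 : enc (M i) = enc (M j) := congrArg enc h2
    rw [(hMmem i).2, (hMmem j).2] at h3
    exact φ.injective (Subtype.ext h3)
  have hψbij : Function.Bijective ψ :=
    (Fintype.bijective_iff_injective_and_card ψ).2 ⟨hψinj, by simp [hcard]⟩
  have hMbasis : LinearIndependent (ZMod 2) M ∧
      Submodule.span (ZMod 2) (Set.range M) = ⊤ := by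
    let B' := B.reindex (Equiv.ofBijective ψ hψbij).symm
    have hB' : ⇑B' = M := by
      funext i
      show (B.reindex (Equiv.ofBijective ψ hψbij).symm) i = M i
      rw [Module.Basis.reindex_apply, Equiv.symm_symm]
      exact Module.Basis.extend_apply_self hs1 (ψ i)
    rw [← hB']
    exact ⟨B'.linearIndependent, B'.span_eq⟩
  have hdetM : IsUnit ((Pi.basisFun (ZMod 2) (Fin 4)).det M) :=
    (Module.Basis.is_basis_iff_det _).1 hMbasis
  have htm : (Pi.basisFun (ZMod 2) (Fin 4)).toMatrix M = Matrix.of fun i j => M j i := by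
    ext i j
    simp [Module.Basis.toMatrix_apply]
  rw [Module.Basis.det_apply, htm] at hdetM
  have hdetM0 : (Matrix.of fun i j => (M j i : ZMod 2)).det ≠ 0 := hdetM.ne_zero
  have hmono : ∀ i j : Fin 4, i < j → (φ i : ℕ) < (φ j : ℕ) := fun i j h => φ.strictMono h
  have h16 : (φ 3 : ℕ) < 16 := by
    obtain ⟨x, _, hex⟩ := Finset.mem_image.1 (φ 3).2
    rw [← hex]; exact enc_lt x
  have hchk := chk_lt _ _ _ _ (hmono 0 1 (by decide)) (hmono 1 2 (by decide))
    (hmono 2 3 (by decide)) h16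
  have hgo : go (Lam (M 0)) (Lam (M 1)) (Lam (M 2)) (Lam (M 3)) = true := hchk
  rw [go_spec] at hgo
  have hcast : ((mA (Lam (M 0)) (Lam (M 1)) (Lam (M 2)) (Lam (M 3))
      + mB (Lam (M 0)) (Lam (M 1)) (Lam (M 2)) (Lam (M 3))
      - mC (Lam (M 0)) (Lam (M 1)) (Lam (M 2)) (Lam (M 3)) : ℤ) : ZMod 2)
      = (Matrix.of fun i j => (M j i : ZMod 2)).det := by
    rw [mcast, poly_id]
    congr 1
    ext i j
    fin_cases i <;> fin_cases j <;>
      simp [Matrix.of_apply, cast0, cast1, cast2, cast3]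
  have hodd : ((mA (Lam (M 0)) (Lam (M 1)) (Lam (M 2)) (Lam (M 3))
      + mB (Lam (M 0)) (Lam (M 1)) (Lam (M 2)) (Lam (M 3))
      - mC (Lam (M 0)) (Lam (M 1)) (Lam (M 2)) (Lam (M 3))) % 2 == 0) ≠ true := by
    intro h
    rw [beq_iff_eq] at h
    have h2 := (ZMod.intCast_zmod_eq_zero_iff_dvd _ 2).2 (Int.dvd_of_emod_eq_zero h)
    rw [hcast] at h2
    exact hdetM0 h2
  have hfin : ∀ v ∈ s, ∃ i : Fin 4, M i = v := by
    intro v hv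
    obtain ⟨i, hi⟩ := hψbij.2 ⟨v, hst hv⟩
    exact ⟨i, congrArg Subtype.val hi⟩
  simp only [Bool.or_eq_true] at hgo
  rcases hgo with ((hg | hA) | hB) | hC
  · exact absurd hg hodd
  · obtain ⟨b, hb⟩ := basis_of_isUnit
      (![Lam (M 0), Lam (M 1), Lam (M 2), Lam (M 3), ![0,0,0,0,1]])
      (by rw [detA]; exact uOk_isUnit hA)
    refine ⟨b, fun v hv => ?_⟩
    obtain ⟨i, hi⟩ := hfin v hv
    have := hb i.castSucc
    rw [← hi]
    fin_cases i <;> exact this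
  · obtain ⟨b, hb⟩ := basis_of_isUnit
      (![Lam (M 0), Lam (M 1), Lam (M 2), Lam (M 3), ![0,0,0,1,0]])
      (by rw [detB]; exact (uOk_isUnit hB).neg)
    refine ⟨b, fun v hv => ?_⟩
    obtain ⟨i, hi⟩ := hfin v hv
    have := hb i.castSucc
    rw [← hi]
    fin_cases i <;> exact this
  · obtain ⟨b, hb⟩ := basis_of_isUnit
      (![Lam (M 0), Lam (M 1), Lam (M 2), Lam (M 3), ![0,0,1,0,0]])
      (by rw [detC]; exact uOk_isUnit hC)
    refine ⟨b, fun v hv => ?_⟩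
    obtain ⟨i, hi⟩ := hfin v hv
    have := hb i.castSucc
    rw [← hi]
    fin_cases i <;> exact this
end
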